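/- Let n ≥ 4 be divisible by 4 and d = n/2. Then every Hamiltonian cycle H on the complete graph with vertex set ZMod n satisfies Σ_{e ∈ H} f_e ≥ n²/2 − n − 2, where f_e is the tight-triangular-form circlet coefficient of the edge e. (This inequality is obtained from the circlet inequality Σ_{e ∈ H} c_{ℓ(e)} ≥ n − 2 by adding (d − 2)/2 copies of each degree constraint, using that every Hamiltonian cycle has exactly n edges.) -/

import Mathlib

/-- The length of an edge between vertices `i, j` of `ZMod n`:
`ℓ(i,j) = min(|i−j|, n−|i−j|)`, expressed as `min (i-j).val (j-i).val`. -/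
def zLen {n : ℕ} (i j : ZMod n) : ℕ := min (i - j).val (j - i).val

/-- Tight-triangular-form circlet coefficient: `f_{i,j} = (d−2) + ℓ(i,j)` if `ℓ(i,j)` is
odd, and `f_{i,j} = (d−2) + (d − ℓ(i,j))` if `ℓ(i,j)` is even. -/
def fco {n : ℕ} (d : ℕ) (i j : ZMod n) : ℕ :=
  if Odd (zLen i j) then d - 2 + zLen i j else d - 2 + (d - zLen i j)

/-- The tight-triangular-form circlet coefficient, as a function on edges. -/
def fSym {n : ℕ} (d : ℕ) : Sym2 (ZMod n) → ℕ :=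
  Sym2.lift ⟨fun i j => fco d i j, fun i j => by
    simp only [fco]; rw [show zLen i j = zLen j i from by simp only [zLen]; rw [min_comm]]⟩

/-! ### Auxiliary definitions -/

/-- Circle norm on `ZMod n`. -/
def nrm {n : ℕ} (x : ZMod n) : ℕ := min x.val (-x).val

/-- The "shift by half" transformation: shift even-residue steps by `d`. -/
def sgm {n : ℕ} (d : ℕ) (u : ZMod n) : ZMod n :=
  if u.val % 2 = 1 then u else u + (d : ZMod n)

section NrmLemmas

variable {n : ℕ} [NeZero n]

lemma nrm_eq (x : ZMod n) : nrm x = min x.val (n - x.val) := by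
  rw [nrm, ZMod.neg_val]
  split_ifs with h
  · subst h; simp
  · rfl

lemma nrm_neg (x : ZMod n) : nrm (-x) = nrm x := by
  simp [nrm, neg_neg, min_comm]

lemma nrm_zero : nrm (0 : ZMod n) = 0 := by simp [nrm]

lemma val_add_cases (x y : ZMod n) :
    ((x + y).val = x.val + y.val ∧ x.val + y.val < n) ∨
      ((x + y).val = x.val + y.val - n ∧ n ≤ x.val + y.val) := by
  rw [ZMod.val_add]
  have hx := x.val_lt
  have hy := y.val_lt
  rcases lt_or_ge (x.val + y.val) n with h | h
  · exact Or.inl ⟨Nat.mod_eq_of_lt h, h⟩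
  · right
    refine ⟨?_, h⟩
    rw [Nat.mod_eq_sub_mod h, Nat.mod_eq_of_lt (by omega)]

lemma nrm_add_le (x y : ZMod n) : nrm (x + y) ≤ nrm x + nrm y := by
  have hx := x.val_lt
  have hy := y.val_lt
  rcases val_add_cases x y with ⟨h, h2⟩ | ⟨h, h2⟩ <;>
    · rw [nrm_eq, nrm_eq, nrm_eq, h]
      simp only [Nat.min_def]
      split_ifs <;> omega

lemma nrm_sum_le (L : List (ZMod n)) : nrm L.sum ≤ (L.map nrm).sum := by
  induction L with
  | nil => simp [nrm_zero]
  | cons u L ih =>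
    rw [List.sum_cons, List.map_cons, List.sum_cons]
    exact le_trans (nrm_add_le u L.sum) (by omega)

lemma nrm_cast_le_half {d k : ℕ} (hn : n = 2 * d) (hk : k ≤ d) :
    nrm ((k : ZMod n)) = k := by
  have hd : 0 < d := by
    have := NeZero.pos n; omega
  rw [nrm_eq, ZMod.val_cast_of_lt (by omega)]
  simp only [Nat.min_def]
  split_ifs <;> omega

lemma nrm_add_half {d : ℕ} (hn : n = 2 * d) (x : ZMod n) :
    nrm (x + (d : ZMod n)) = d - nrm x := by
  have hd : 0 < d := by
    have := NeZero.pos n; omega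
  have hdval : (d : ZMod n).val = d := ZMod.val_cast_of_lt (by omega)
  have hx := x.val_lt
  rcases val_add_cases x (d : ZMod n) with ⟨h, h2⟩ | ⟨h, h2⟩ <;>
    · rw [nrm_eq, nrm_eq, h, hdval]
      simp only [Nat.min_def]
      split_ifs <;> omega

lemma nrm_odd_iff (hn2 : 2 ∣ n) (x : ZMod n) : nrm x % 2 = x.val % 2 := by
  have hx := x.val_lt
  rw [nrm_eq]
  simp only [Nat.min_def]
  split_ifs <;> omega

end NrmLemmas

section Bridge

variable {n : ℕ} [NeZero n]

lemma fco_eq {d : ℕ} (hn : n = 2 * d) (i j : ZMod n) :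
    fco d i j = d - 2 + nrm (sgm d (j - i)) := by
  have hz : zLen i j = nrm (j - i) := by
    have hneg : -(j - i) = i - j := by ring
    rw [zLen, nrm, hneg, min_comm]
  have hodd : Odd (zLen i j) ↔ (j - i).val % 2 = 1 := by
    rw [Nat.odd_iff, hz, nrm_odd_iff ⟨d, hn⟩]
  rw [fco, sgm]
  by_cases h : (j - i).val % 2 = 1
  · rw [if_pos (hodd.mpr h), if_pos h, hz]
  · rw [if_neg (fun hc => h (hodd.mp hc)), if_neg h, hz, nrm_add_half hn]

end Bridge

section Scanl

variable {G : Type*} [AddCommGroup G]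

lemma mem_scanl_self (q : G) (L : List G) : q ∈ List.scanl (· + ·) q L := by
  cases L <;> simp [List.scanl]

lemma exists_split (L : List G) (q x : G) (hx : x ∈ List.scanl (· + ·) q L) :
    ∃ L₁ L₂ : List G, L = L₁ ++ L₂ ∧ x = q + L₁.sum := by
  induction L generalizing q with
  | nil =>
    simp only [List.scanl_nil, List.mem_singleton] at hx
    exact ⟨[], [], by simp, by simp [hx]⟩
  | cons u L ih =>
    rw [List.scanl_cons] at hx
    rcases List.mem_cons.mp hx with h | h
    · exact ⟨[], u :: L, rfl, by simp [h]⟩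
    · obtain ⟨L₁, L₂, rfl, hx2⟩ := ih _ h
      exact ⟨u :: L₁, L₂, rfl, by simp [hx2, add_assoc]⟩

lemma exists_split₂ (L : List G) (q a b : G) (ha : a ∈ List.scanl (· + ·) q L)
    (hb : b ∈ List.scanl (· + ·) q L) :
    ∃ L₁ L₂ L₃ : List G, L = L₁ ++ L₂ ++ L₃ ∧
      ((a = q + L₁.sum ∧ b = q + L₁.sum + L₂.sum) ∨
        (b = q + L₁.sum ∧ a = q + L₁.sum + L₂.sum)) := by
  induction L generalizing q with
  | nil =>
    simp only [List.scanl_nil, List.mem_singleton] at ha hb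
    exact ⟨[], [], [], by simp, Or.inl ⟨by simp [ha], by simp [ha, hb]⟩⟩
  | cons u L ih =>
    rw [List.scanl_cons] at ha hb
    rcases List.mem_cons.mp ha with ha' | ha'
    · rcases List.mem_cons.mp hb with hb' | hb'
      · exact ⟨[], [], u :: L, by simp, Or.inl ⟨by simp [ha'], by simp [ha', hb']⟩⟩
      · obtain ⟨B₁, B₂, rfl, hb2⟩ := exists_split _ _ _ hb'
        exact ⟨[], u :: B₁, B₂, by simp, Or.inl ⟨by simp [ha'],
          by simp [ha', hb2, add_assoc]⟩⟩
    · rcases List.mem_cons.mp hb with hb' | hb'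
      · obtain ⟨B₁, B₂, rfl, ha2⟩ := exists_split _ _ _ ha'
        exact ⟨[], u :: B₁, B₂, by simp, Or.inr ⟨by simp [hb'],
          by simp [hb', ha2, add_assoc]⟩⟩
      · obtain ⟨L₁, L₂, L₃, rfl, h⟩ := ih _ ha' hb'
        refine ⟨u :: L₁, L₂, L₃, by simp, ?_⟩
        rcases h with ⟨h1, h2⟩ | ⟨h1, h2⟩
        · exact Or.inl ⟨by simp [h1, add_assoc], by simp [h2, add_assoc]⟩
        · exact Or.inr ⟨by simp [h1, add_assoc], by simp [h2, add_assoc]⟩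

end Scanl

section TwoArc

variable {n : ℕ} [NeZero n]

lemma two_arc (M : List (ZMod n)) (q a b : ZMod n) (hM : M.sum = 0)
    (ha : a ∈ List.scanl (· + ·) q M) (hb : b ∈ List.scanl (· + ·) q M) :
    2 * nrm (a - b) ≤ (M.map nrm).sum := by
  obtain ⟨L₁, L₂, L₃, rfl, h⟩ := exists_split₂ M q a b ha hb
  simp only [List.sum_append] at hM
  have key : ∀ c e : ZMod n, c - e = -L₂.sum ∨ c - e = L₂.sum →
      2 * nrm (c - e) ≤ (L₁.map nrm).sum + ((L₂.map nrm).sum + (L₃.map nrm).sum) := by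
    intro c e hce
    have h2 : nrm (c - e) = nrm L₂.sum := by
      rcases hce with hce | hce <;> rw [hce]
      all_goals exact nrm_neg _
    have h13 : nrm (c - e) = nrm (L₁.sum + L₃.sum) := by
      have h0 : L₁.sum + L₃.sum = -L₂.sum := by linear_combination hM
      rw [h0]
      rcases hce with hce | hce <;> rw [hce]
      all_goals exact (nrm_neg _).symm
    have b2 : nrm (c - e) ≤ (L₂.map nrm).sum := h2 ▸ nrm_sum_le L₂
    have b13 : nrm (c - e) ≤ (L₁.map nrm).sum + (L₃.map nrm).sum := by
      rw [h13]
      exact le_trans (nrm_add_le _ _)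
        (Nat.add_le_add (nrm_sum_le L₁) (nrm_sum_le L₃))
    omega
  have hmap : ((L₁ ++ L₂ ++ L₃).map nrm).sum =
      (L₁.map nrm).sum + ((L₂.map nrm).sum + (L₃.map nrm).sum) := by
    simp [add_assoc]
  rw [hmap]
  rcases h with ⟨h1, h2⟩ | ⟨h1, h2⟩
  · exact key a b (Or.inl (by rw [h1, h2]; ring))
  · exact key a b (Or.inr (by rw [h1, h2]; ring))

end TwoArc

section PairLift

variable {n : ℕ}

lemma sgm_cases (d : ℕ) (u : ZMod n) : sgm d u = u ∨ sgm d u = u + (d : ZMod n) := by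
  rw [sgm]; split_ifs <;> [exact Or.inl rfl; exact Or.inr rfl]

lemma pair_lift (d : ℕ) (hDD : (d : ZMod n) + (d : ZMod n) = 0) :
    ∀ (L : List (ZMod n)) (q q' : ZMod n), (q' = q ∨ q' = q + (d : ZMod n)) →
      ∀ x ∈ List.scanl (· + ·) q L,
        ∃ y ∈ List.scanl (· + ·) q' (L.map (sgm d)), y = x ∨ y = x + (d : ZMod n) := by
  intro L
  induction L with
  | nil =>
    intro q q' hq x hx
    simp only [List.scanl_nil, List.mem_singleton] at hx
    subst hx
    exact ⟨q', mem_scanl_self _ _, hq⟩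
  | cons u L ih =>
    intro q q' hq x hx
    rw [List.scanl_cons] at hx
    rcases List.mem_cons.mp hx with hx' | hx'
    · subst hx'
      exact ⟨q', mem_scanl_self _ _, hq⟩
    · have hstep : q' + sgm d u = (q + u) ∨ q' + sgm d u = (q + u) + (d : ZMod n) := by
        rcases hq with hq | hq <;> rcases sgm_cases d u with hs | hs <;>
          rw [hq, hs]
        · exact Or.inl rfl
        · exact Or.inr (by ring)
        · exact Or.inr (by ring)
        · refine Or.inl ?_
          have : q + (d : ZMod n) + (u + (d : ZMod n)) =
              q + u + ((d : ZMod n) + (d : ZMod n)) := by ring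
          rw [this, hDD, add_zero]
      obtain ⟨y, hy, hcase⟩ := ih (q + u) (q' + sgm d u) hstep x hx'
      refine ⟨y, ?_, hcase⟩
      rw [List.map_cons, List.scanl_cons]
      exact List.mem_cons_of_mem _ hy

end PairLift

section Diam

variable {n : ℕ} [NeZero n]

lemma diam_lemma {d : ℕ} (hn : n = 2 * d) (hd2 : 2 ≤ d) (T : List (ZMod n))
    (hT : ∀ x : ZMod n, ∃ y ∈ T, y = x ∨ y = x + (d : ZMod n)) :
    ∃ a ∈ T, ∃ b ∈ T, d - 1 ≤ nrm (a - b) := by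
  by_contra hcon
  push_neg at hcon
  obtain ⟨t, ht, -⟩ := hT 0
  have hDD : (d : ZMod n) + (d : ZMod n) = 0 := by
    rw [← Nat.cast_add, show d + d = n by omega, ZMod.natCast_self]
  have key : ∀ s ∈ T, s - 1 ∈ T := by
    intro s hs
    obtain ⟨y, hy, hcase⟩ := hT (s + (d : ZMod n) - 1)
    rcases hcase with hc | hc
    · exfalso
      have hdiff : y - s = ((d - 1 : ℕ) : ZMod n) := by
        rw [hc, Nat.cast_sub (by omega : 1 ≤ d)]
        push_cast
        ring
      have := hcon y hy s hs
      rw [hdiff, nrm_cast_le_half hn (by omega : d - 1 ≤ d)] at this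
      omega
    · have : y = s - 1 := by
        rw [hc]
        linear_combination hDD
      rw [this] at hy
      exact hy
  have iter : ∀ k : ℕ, t - (k : ZMod n) ∈ T := by
    intro k
    induction k with
    | zero => simpa using ht
    | succ k ihk =>
      have h2 : (t - ((k + 1 : ℕ) : ZMod n)) = (t - (k : ZMod n)) - 1 := by
        push_cast; ring
      rw [h2]
      exact key _ ihk
  have hd := iter d
  have hlast := hcon t ht _ hd
  have h3 : t - (t - (d : ZMod n)) = ((d : ℕ) : ZMod n) := by ring
  rw [h3, nrm_cast_le_half hn le_rfl] at hlast
  omega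

end Diam

section SgmSum

variable {n : ℕ} [NeZero n]

lemma countP_parity_split (L : List (ZMod n)) :
    L.countP (fun u => u.val % 2 = 0) + L.countP (fun u => u.val % 2 = 1) =
      L.length := by
  induction L with
  | nil => simp
  | cons u L ih =>
    rcases Nat.mod_two_eq_zero_or_one u.val with h | h <;>
      simp [List.countP_cons, h] <;> omega

lemma sgm_sum (d : ℕ) (L : List (ZMod n)) :
    (L.map (sgm d)).sum =
      L.sum + ((d * L.countP (fun u => u.val % 2 = 0) : ℕ) : ZMod n) := by
  induction L with
  | nil => simp
  | cons u L ih =>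
    rw [List.map_cons, List.sum_cons, List.sum_cons, ih, List.countP_cons, sgm]
    by_cases h : u.val % 2 = 1
    · rw [if_pos h]
      have : (decide (u.val % 2 = 0)) = false := by
        simp; omega
      rw [this]
      simp [add_assoc]
    · rw [if_neg h]
      have hdec : (decide (u.val % 2 = 0)) = true := by
        simp; omega
      rw [hdec]
      simp only [if_true]
      push_cast
      ring

lemma odd_count_even (hn2 : 2 ∣ n) (L : List (ZMod n)) (hL : L.sum = 0) :
    2 ∣ L.countP (fun u => u.val % 2 = 1) := by
  have hcast : ∀ M : List (ZMod n),
      ((M.map (fun u => ((u.val : ℕ) : ZMod 2))).sum : ZMod 2) =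
        ((M.countP (fun u => u.val % 2 = 1) : ℕ) : ZMod 2) := by
    intro M
    induction M with
    | nil => simp
    | cons u M ihM =>
      rw [List.map_cons, List.sum_cons, ihM, List.countP_cons]
      have hmod : ((u.val : ℕ) : ZMod 2) = ((u.val % 2 : ℕ) : ZMod 2) :=
        (ZMod.natCast_mod u.val 2).symm
      by_cases h : u.val % 2 = 1
      · rw [if_pos (by simpa using h), hmod, h]
        push_cast
        ring
      · have h0 : u.val % 2 = 0 := by omega
        rw [if_neg (by simpa using h), hmod, h0]
        push_cast
        ring
  have hφ : ((L.map (fun u => ((u.val : ℕ) : ZMod 2))).sum : ZMod 2) = 0 := by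
    have hmap : (L.map (fun u => ((u.val : ℕ) : ZMod 2))).sum =
        (ZMod.castHom hn2 (ZMod 2)) L.sum := by
      rw [map_list_sum]
      congr 1
      exact List.map_congr_left fun u _ => by
        rw [ZMod.castHom_apply, ← ZMod.natCast_val]
    rw [hmap, hL, map_zero]
  rw [hcast] at hφ
  exact (ZMod.natCast_eq_zero_iff _ _).mp hφ

end SgmSum

section WalkGlue

variable {n : ℕ}

lemma support_scanl {a b : ZMod n} (w : (⊤ : SimpleGraph (ZMod n)).Walk a b) :
    w.support = List.scanl (· + ·) a (w.darts.map fun t => t.snd - t.fst) := by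
  induction w with
  | nil => simp [List.scanl]
  | cons h p ih =>
    rw [SimpleGraph.Walk.support_cons, SimpleGraph.Walk.darts_cons, List.map_cons,
      List.scanl_cons, ih]
    congr 2
    abel

lemma steps_sum {a b : ZMod n} (w : (⊤ : SimpleGraph (ZMod n)).Walk a b) :
    ((w.darts.map fun t => t.snd - t.fst)).sum = b - a := by
  induction w with
  | nil => simp
  | cons h p ih =>
    rw [SimpleGraph.Walk.darts_cons, List.map_cons, List.sum_cons, ih]
    ring

lemma sum_map_const_add (c : ℕ) (g : α → ℕ) (L : List α) :
    (L.map fun t => c + g t).sum = L.length * c + (L.map g).sum := by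
  induction L with
  | nil => simp
  | cons u L ih =>
    rw [List.map_cons, List.sum_cons, ih, List.map_cons, List.sum_cons,
      List.length_cons]
    ring

end WalkGlue

/-- The tight-triangular-form circlet inequality: for `n ≥ 4` divisible by 4 and
`d = n/2`, every Hamiltonian cycle `H` on `ZMod n` satisfies
`Σ_{e ∈ H} f_e ≥ n²/2 − n − 2`. -/
theorem circlet_TT_valid (n : ℕ) (hn : 4 ≤ n) (h4 : 4 ∣ n)
    (v : ZMod n) (w : (⊤ : SimpleGraph (ZMod n)).Walk v v)
    (hw : w.IsHamiltonianCycle) :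
    n ^ 2 / 2 - n - 2 ≤ ∑ e ∈ w.edges.toFinset, fSym (n / 2) e := by
  have hnz : NeZero n := ⟨by omega⟩
  set d : ℕ := n / 2 with hd
  have hn2d : n = 2 * d := by omega
  have hd2 : 2 ≤ d := by omega
  have hdeven : 2 ∣ d := by omega
  set steps : List (ZMod n) := w.darts.map fun t => t.snd - t.fst with hsteps
  -- basic walk facts
  have hsupp : w.support = List.scanl (· + ·) v steps := support_scanl w
  have hsum0 : steps.sum = 0 := by rw [hsteps, steps_sum]; ring
  have hcov : ∀ x : ZMod n, x ∈ List.scanl (· + ·) v steps := fun x => by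
    rw [← hsupp]; exact hw.mem_support x
  have hlen : steps.length = n := by
    rw [hsteps, List.length_map, SimpleGraph.Walk.length_darts, hw.length_eq,
      ZMod.card]
  -- the transformed step list
  set M : List (ZMod n) := steps.map (sgm d) with hM
  have hMsum : M.sum = 0 := by
    rw [hM, sgm_sum, hsum0, zero_add]
    have hsplit : steps.countP (fun u => u.val % 2 = 0) +
        steps.countP (fun u => u.val % 2 = 1) = n := by
      have hc := countP_parity_split steps
      rw [hlen] at hc
      exact hc
    have hodd : 2 ∣ steps.countP (fun u => u.val % 2 = 1) :=
      odd_count_even ⟨d, hn2d⟩ steps hsum0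
    obtain ⟨e, he⟩ : 2 ∣ steps.countP (fun u => u.val % 2 = 0) := by omega
    rw [he, show d * (2 * e) = n * e by rw [hn2d]; ring]
    push_cast
    rw [ZMod.natCast_self]
    ring
  -- transformed positions meet every antipodal pair
  have hDD : (d : ZMod n) + (d : ZMod n) = 0 := by
    rw [← Nat.cast_add, show d + d = n by omega, ZMod.natCast_self]
  have hpair : ∀ x : ZMod n, ∃ y ∈ List.scanl (· + ·) v M,
      y = x ∨ y = x + (d : ZMod n) := fun x =>
    pair_lift d hDD steps v v (Or.inl rfl) x (hcov x)
  -- two far-apart points among transformed positions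
  obtain ⟨a, ha, b, hb, hab⟩ :=
    diam_lemma hn2d hd2 (List.scanl (· + ·) v M) hpair
  -- the two-arc bound
  have hC : 2 * (d - 1) ≤ (M.map nrm).sum :=
    le_trans (by omega) (two_arc M v a b hMsum ha hb)
  -- rewrite the sum of coefficients
  have hsum_f : ∑ e ∈ w.edges.toFinset, fSym d e = n * (d - 2) + (M.map nrm).sum := by
    rw [List.sum_toFinset _ hw.isCycle.edges_nodup]
    have hedges : w.edges.map (fSym d) =
        w.darts.map fun t => fco d t.fst t.snd := by
      rw [SimpleGraph.Walk.edges, List.map_map]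
      apply List.map_congr_left
      rintro ⟨⟨x, y⟩, hadj⟩ _
      simp [fSym, SimpleGraph.Dart.edge]
    rw [hedges]
    have hfco : (w.darts.map fun t => fco d t.fst t.snd) =
        w.darts.map fun t => d - 2 + nrm (sgm d (t.snd - t.fst)) := by
      apply List.map_congr_left
      intro t _
      exact fco_eq hn2d _ _
    rw [hfco]
    rw [sum_map_const_add (d - 2) (fun t => nrm (sgm d (t.snd - t.fst))) w.darts]
    have hlen2 : w.darts.length = n := by
      rw [SimpleGraph.Walk.length_darts, hw.length_eq, ZMod.card]
    rw [hlen2]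
    congr 1
    rw [hM, hsteps, List.map_map, List.map_map]
    rfl
  rw [hsum_f]
  -- final arithmetic
  have hsq : n ^ 2 = 2 * (d * n) := by rw [hn2d]; ring
  have hhalf : n ^ 2 / 2 = d * n := by rw [hsq, Nat.mul_div_cancel_left _ (by norm_num)]
  have hmul : n * (d - 2) = d * n - 2 * n := by
    rw [Nat.mul_sub, Nat.mul_comm n d, Nat.mul_comm n 2]
  rw [hhalf, hmul]
  have hdn : 2 * n ≤ d * n := Nat.mul_le_mul_right n (by omega)
  omega
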